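/- Balance of mass and energy for the semi-discretization (Lemma 4.3): Let (ρ_h, m_h) be a semi-discrete solution on [0,T]. Then for every t ∈ [0,T]: d/dt Σ_e ∫_0^{ℓ_e} ρ_h(t,x) dx = 0, and d/dt Σ_e ∫_0^{ℓ_e} ( m_h(t,x)²/(2ρ_h(t,x)) + P(ρ_h(t,x)) ) dx + Σ_e ∫_0^{ℓ_e} ( a_e |∂_x m_h(t,x)|²/ρ_h(t,x)² + b_e |m_h(t,x)|³/ρ_h(t,x)² ) dx = 0, where P = P_e on edge e. -/

import Mathlib

/-- The network pairing `(u, w)_E = Σ_{e∈E} ∫_0^{ℓ_e} u_e w_e dx` of two families of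
functions on the edges of a pipe network. -/
noncomputable def pairE {E : Type} [Fintype E] (ℓ : E → ℝ) (u w : E → ℝ → ℝ) : ℝ :=
  ∑ e, ∫ x in (0 : ℝ)..(ℓ e), u e x * w e x

/-- `q` is piecewise constant on the uniform mesh of `[0, ℓ e]` into `N e` subintervals,
for every edge `e`.  This is the space `Q_h` of the mixed finite element method
(the value at the right endpoint `ℓ e` is irrelevant). -/
def IsPwConst {E : Type} (N : E → ℕ) (ℓ : E → ℝ) (q : E → ℝ → ℝ) : Prop :=
  ∀ e, ∀ i : ℕ, i < N e →
    ∀ x ∈ Set.Ico ((i : ℝ) * ℓ e / (N e : ℝ)) (((i : ℝ) + 1) * ℓ e / (N e : ℝ)),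
      q e x = q e ((i : ℝ) * ℓ e / (N e : ℝ))

/-- `v` is continuous on `[0, ℓ e]` and affine on each subinterval of the uniform mesh
of `[0, ℓ e]` into `N e` subintervals, for every edge `e`. -/
def IsPwAffine {E : Type} (N : E → ℕ) (ℓ : E → ℝ) (v : E → ℝ → ℝ) : Prop :=
  (∀ e, ContinuousOn (v e) (Set.Icc 0 (ℓ e))) ∧
  (∀ e, ∀ i : ℕ, i < N e → ∃ α β : ℝ,
    ∀ x ∈ Set.Icc ((i : ℝ) * ℓ e / (N e : ℝ)) (((i : ℝ) + 1) * ℓ e / (N e : ℝ)),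
      v e x = α * x + β)

/-- The vertex sum `Σ_{e∈E(w)} f_e(w) n_e(w)` at a vertex `w`, where `n_e(w) = -1` if
`w` is the initial vertex `src e`, `n_e(w) = +1` if `w` is the terminal vertex `dst e`,
and a function `f_e` is evaluated at `src e` as `f e 0` and at `dst e` as `f e (ℓ e)`. -/
noncomputable def vtxSum {V E : Type} [Fintype E] [DecidableEq V]
    (src dst : E → V) (ℓ : E → ℝ) (f : E → ℝ → ℝ) (w : V) : ℝ :=
  ∑ e, ((if dst e = w then f e (ℓ e) else 0) - (if src e = w then f e 0 else 0))

/-- The space `V_h`: continuous piecewise affine families that satisfy the conservative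
coupling condition `Σ_{e∈E(w)} v_e(w) n_e(w) = 0` at every vertex `w`. -/
def InVh {V E : Type} [Fintype E] [DecidableEq V]
    (src dst : E → V) (N : E → ℕ) (ℓ : E → ℝ) (v : E → ℝ → ℝ) : Prop :=
  IsPwAffine N ℓ v ∧ ∀ w : V, vtxSum src dst ℓ v w = 0

/-- The subinterval-wise (broken) spatial derivative of a piecewise affine family `v`:
on the subinterval of the mesh containing `x`, it is the slope of `v e` there. -/
noncomputable def Dx {E : Type} (N : E → ℕ) (ℓ : E → ℝ) (v : E → ℝ → ℝ)
    (e : E) (x : ℝ) : ℝ :=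
  let i : ℕ := min (N e - 1) ⌊x * (N e : ℝ) / ℓ e⌋₊
  (v e (((i : ℝ) + 1) * ℓ e / (N e : ℝ)) - v e ((i : ℝ) * ℓ e / (N e : ℝ)))
    * ((N e : ℝ) / ℓ e)

/-- The two variational equations of the semi-discrete (Galerkin) problem
(Problem 4.2) at a fixed time, for state `(ρ, m)` with time derivatives `(ρt, mt)`:
for all `q_h ∈ Q_h` and all `v_h ∈ V_h`,
`(∂ₜ ρ_h, q_h)_E = -(∂ₓ m_h, q_h)_E` and
`((1/ρ_h) ∂ₜ m_h - (m_h/(2ρ_h²)) ∂ₜ ρ_h, v_h)_E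
   = ( m_h²/(2ρ_h²) + P'(ρ_h) - (a/ρ_h²) ∂ₓ m_h, ∂ₓ v_h )_E
     - ( (m_h/(2ρ_h²)) ∂ₓ m_h + b |m_h| m_h/ρ_h², v_h )_E`,
with `P_e'(ρ) = c_e γ/(γ-1) ρ^(γ-1)` on edge `e`. -/
def SemiDiscEqs {V E : Type} [Fintype V] [Fintype E] [DecidableEq V]
    (src dst : E → V) (N : E → ℕ) (ℓ : E → ℝ) (γ : ℝ) (a b c : E → ℝ)
    (ρ m ρt mt : E → ℝ → ℝ) : Prop :=
  (∀ q : E → ℝ → ℝ, IsPwConst N ℓ q →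
      pairE ℓ ρt q = -pairE ℓ (Dx N ℓ m) q) ∧
  (∀ v : E → ℝ → ℝ, InVh src dst N ℓ v →
      pairE ℓ (fun e x => (1 / ρ e x) * mt e x - m e x / (2 * ρ e x ^ 2) * ρt e x) v
        = pairE ℓ (fun e x => m e x ^ 2 / (2 * ρ e x ^ 2)
              + c e * γ / (γ - 1) * ρ e x ^ (γ - 1)
              - a e / ρ e x ^ 2 * Dx N ℓ m e x) (Dx N ℓ v)
          - pairE ℓ (fun e x => m e x / (2 * ρ e x ^ 2) * Dx N ℓ m e x
              + b e * |m e x| * m e x / ρ e x ^ 2) v)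

/-- A semi-discrete solution of the Galerkin approximation on the time set `S`:
a continuously differentiable map `t ↦ (ρh t, mh t) ∈ Q_h × V_h` (with time
derivatives `ρht`, `mht`) with everywhere positive density, satisfying the
semi-discrete variational equations for every `t ∈ S`. -/
def IsSemiDiscSol {V E : Type} [Fintype V] [Fintype E] [DecidableEq V]
    (src dst : E → V) (N : E → ℕ) (ℓ : E → ℝ) (γ : ℝ) (a b c : E → ℝ)
    (S : Set ℝ) (ρh mh ρht mht : ℝ → E → ℝ → ℝ) : Prop :=
  (∀ t ∈ S, IsPwConst N ℓ (ρh t) ∧ InVh src dst N ℓ (mh t)) ∧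
  (∀ t ∈ S, ∀ e, ∀ x ∈ Set.Icc 0 (ℓ e), 0 < ρh t e x) ∧
  (∀ t ∈ S, ∀ e x,
      HasDerivWithinAt (fun s => ρh s e x) (ρht t e x) S t ∧
      HasDerivWithinAt (fun s => mh s e x) (mht t e x) S t) ∧
  (∀ e x, ContinuousOn (fun t => ρht t e x) S) ∧
  (∀ e x, ContinuousOn (fun t => mht t e x) S) ∧
  (∀ t ∈ S, SemiDiscEqs src dst N ℓ γ a b c (ρh t) (mh t) (ρht t) (mht t))


open MeasureTheory Set intervalIntegral

lemma cell_lt {N : ℕ} (hN : 1 ≤ N) {ℓ : ℝ} (hl : 0 < ℓ) (i : ℕ) :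
    (i : ℝ) * ℓ / N < ((i : ℝ) + 1) * ℓ / N := by
  have hN0 : (0:ℝ) < N := by exact_mod_cast hN
  rw [div_lt_div_iff₀ hN0 hN0]
  nlinarith [Nat.cast_nonneg (α := ℝ) i]

lemma node_mem {N : ℕ} (hN : 1 ≤ N) {ℓ : ℝ} (hl : 0 < ℓ) {i : ℕ} (hi : i ≤ N) :
    (i : ℝ) * ℓ / N ∈ Set.Icc 0 ℓ := by
  have hN0 : (0:ℝ) < N := by exact_mod_cast hN
  have hiN : (i:ℝ) ≤ N := by exact_mod_cast hi
  constructor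
  · positivity
  · rw [div_le_iff₀ hN0]; nlinarith

lemma cell_integral_congr {u v : ℝ} (huv : u < v) {f g : ℝ → ℝ}
    (hg : Continuous g) (hfg : ∀ x ∈ Set.Ico u v, f x = g x) :
    IntervalIntegrable f volume u v ∧ (∫ x in u..v, f x) = ∫ x in u..v, g x := by
  have hae : ∀ᵐ x ∂(volume : Measure ℝ), x ∈ Set.uIoc u v → f x = g x := by
    have hv : ∀ᵐ x ∂(volume : Measure ℝ), x ≠ v := by
      rw [ae_iff]
      simpa using measure_singleton (α := ℝ) v
    filter_upwards [hv] with x hx hmem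
    rw [uIoc_of_le huv.le] at hmem
    exact hfg x ⟨hmem.1.le, lt_of_le_of_ne hmem.2 hx⟩
  have hae' : f =ᵐ[(volume : Measure ℝ).restrict (Set.uIoc u v)] g :=
    (ae_restrict_iff' measurableSet_uIoc).2 hae
  exact ⟨(hg.intervalIntegrable u v).congr_ae hae'.symm, integral_congr_ae hae⟩

lemma cellify {N : ℕ} (hN : 1 ≤ N) {ℓ : ℝ} (hl : 0 < ℓ) (f : ℝ → ℝ) (g : ℕ → ℝ → ℝ)
    (hg : ∀ i, Continuous (g i))
    (hfg : ∀ i, i < N → ∀ x ∈ Set.Ico ((i:ℝ)*ℓ/N) (((i:ℝ)+1)*ℓ/N), f x = g i x) :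
    (∫ x in (0:ℝ)..ℓ, f x)
      = ∑ i ∈ Finset.range N, ∫ x in ((i:ℝ)*ℓ/N)..(((i:ℝ)+1)*ℓ/N), g i x := by
  have hN0 : (0:ℝ) < N := by exact_mod_cast hN
  have key : ∀ i, i < N → IntervalIntegrable f volume ((i:ℝ)*ℓ/N) (((i:ℝ)+1)*ℓ/N) ∧
      (∫ x in ((i:ℝ)*ℓ/N)..(((i:ℝ)+1)*ℓ/N), f x)
        = ∫ x in ((i:ℝ)*ℓ/N)..(((i:ℝ)+1)*ℓ/N), g i x :=
    fun i hi => cell_integral_congr (cell_lt hN hl i) (hg i) (hfg i hi)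
  have hsum := intervalIntegral.sum_integral_adjacent_intervals
      (a := fun i : ℕ => (i:ℝ)*ℓ/N) (n := N) (μ := volume) (f := f) ?_
  · have h0 : ((0:ℕ):ℝ)*ℓ/N = 0 := by simp
    have hNl : ((N:ℕ):ℝ)*ℓ/N = ℓ := by field_simp
    rw [h0, hNl] at hsum
    rw [← hsum]
    refine Finset.sum_congr rfl fun i hi => ?_
    have hi' := Finset.mem_range.1 hi
    have : ((i+1 : ℕ):ℝ) = (i:ℝ)+1 := by push_cast; ring
    simp only [this]
    exact (key i hi').2
  · intro i hi
    have : ((i+1 : ℕ):ℝ) = (i:ℝ)+1 := by push_cast; ring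
    simpa [this] using (key i hi).1

lemma Dx_cell {E : Type} (N : E → ℕ) (ℓ : E → ℝ) (v : E → ℝ → ℝ) (e : E)
    (hN : 1 ≤ N e) (hl : 0 < ℓ e) {i : ℕ} (hi : i < N e) {x : ℝ}
    (hx : x ∈ Set.Ico ((i:ℝ) * ℓ e / (N e:ℝ)) (((i:ℝ)+1) * ℓ e / (N e:ℝ))) :
    Dx N ℓ v e x
      = (v e (((i:ℝ)+1) * ℓ e / (N e:ℝ)) - v e ((i:ℝ) * ℓ e / (N e:ℝ))) * ((N e:ℝ) / ℓ e) := by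
  have hN0 : (0:ℝ) < N e := by exact_mod_cast hN
  have hx0 : 0 ≤ x := le_trans (node_mem hN hl hi.le).1 hx.1
  have hfl : ⌊x * (N e:ℝ) / ℓ e⌋₊ = i := by
    rw [Nat.floor_eq_iff (by positivity)]
    constructor
    · have := hx.1
      rw [div_le_iff₀ hN0] at this
      rw [le_div_iff₀ hl]
      nlinarith
    · have := hx.2
      rw [lt_div_iff₀ hN0] at this
      rw [div_lt_iff₀ hl]
      nlinarith
  have hmin : min (N e - 1) ⌊x * (N e:ℝ) / ℓ e⌋₊ = i := by
    rw [hfl]; exact min_eq_right (Nat.le_sub_one_of_lt hi)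
  simp only [Dx, hmin]

lemma pwAffine_interp {E : Type} {N : E → ℕ} {ℓ : E → ℝ} {v : E → ℝ → ℝ}
    (hv : IsPwAffine N ℓ v) (e : E) (hN : 1 ≤ N e) (hl : 0 < ℓ e) {i : ℕ} (hi : i < N e)
    {x : ℝ} (hx : x ∈ Set.Icc ((i:ℝ) * ℓ e / (N e:ℝ)) (((i:ℝ)+1) * ℓ e / (N e:ℝ))) :
    v e x = v e ((i:ℝ) * ℓ e / (N e:ℝ))
      + (x - (i:ℝ) * ℓ e / (N e:ℝ))
        * ((v e (((i:ℝ)+1) * ℓ e / (N e:ℝ)) - v e ((i:ℝ) * ℓ e / (N e:ℝ))) * ((N e:ℝ) / ℓ e)) := by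
  obtain ⟨α, β, hab⟩ := hv.2 e i hi
  have hlt := cell_lt hN hl (ℓ := ℓ e) i
  have h1 := hab _ (Set.left_mem_Icc.2 hlt.le)
  have h2 := hab _ (Set.right_mem_Icc.2 hlt.le)
  have h3 := hab x hx
  have hN0 : (0:ℝ) < N e := by exact_mod_cast hN
  rw [h1, h2, h3]
  field_simp
  ring

lemma integral_affine_mul (u h p d p' d' : ℝ) :
    (∫ x in u..(u+h), (p + (x - u)*d) * (p' + (x - u)*d'))
      = p*p'*h + (p*d' + p'*d)*(h^2/2) + d*d'*(h^3/3) := by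
  have hfun : (fun x => (p + (x-u)*d) * (p' + (x-u)*d'))
      = fun x => (fun y => p*p' + (p*d'+p'*d)*y + d*d'*y^2) (x - u) := by
    funext x; ring
  rw [hfun, intervalIntegral.integral_comp_sub_right (fun y => p*p' + (p*d'+p'*d)*y + d*d'*y^2) u]
  rw [show u - u = 0 by ring, show u + h - u = h by ring]
  rw [intervalIntegral.integral_add (Continuous.intervalIntegrable (by fun_prop) _ _)
        (Continuous.intervalIntegrable (by fun_prop) _ _),
      intervalIntegral.integral_add (Continuous.intervalIntegrable (by fun_prop) _ _)
        (Continuous.intervalIntegrable (by fun_prop) _ _),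
      intervalIntegral.integral_const, intervalIntegral.integral_const_mul,
      intervalIntegral.integral_const_mul, integral_id, integral_pow]
  push_cast
  simp [smul_eq_mul]
  ring

lemma integral_LL {N : ℕ} {ℓ : ℝ} (i : ℕ) (p d p' d' : ℝ) :
    (∫ x in ((i:ℝ)*ℓ/N)..(((i:ℝ)+1)*ℓ/N),
        (p + (x - (i:ℝ)*ℓ/N)*d) * (p' + (x - (i:ℝ)*ℓ/N)*d'))
      = p*p'*(ℓ/N) + (p*d' + p'*d)*((ℓ/N)^2/2) + d*d'*((ℓ/N)^3/3) := by
  rw [show ((i:ℝ)+1)*ℓ/N = (i:ℝ)*ℓ/N + ℓ/N by ring]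
  exact integral_affine_mul _ _ _ _ _ _

lemma sum_edge_sub {V E : Type} [Fintype V] [Fintype E] [DecidableEq V]
    (src dst : E → V) (ℓ : E → ℝ) (f : E → ℝ → ℝ)
    (h : ∀ w, vtxSum src dst ℓ f w = 0) :
    ∑ e, (f e (ℓ e) - f e 0) = 0 := by
  calc ∑ e, (f e (ℓ e) - f e 0) = ∑ w, vtxSum src dst ℓ f w := by
        unfold vtxSum
        rw [Finset.sum_comm]
        refine Finset.sum_congr rfl fun e _ => ?_
        rw [Finset.sum_sub_distrib, Finset.sum_ite_eq, Finset.sum_ite_eq]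
        simp
    _ = 0 := Finset.sum_eq_zero fun w _ => h w

lemma abs_cube (y : ℝ) : |y|^3 = y^2 * |y| := by
  rw [pow_succ, sq_abs]

lemma len_mul_slope {N : ℕ} (hN : (N:ℝ) ≠ 0) {ℓ : ℝ} (hl : ℓ ≠ 0) (z : ℝ) :
    ℓ / (N:ℝ) * (z * ((N:ℝ) / ℓ)) = z := by
  field_simp


set_option maxHeartbeats 1600000 in
/-- **Balance of mass and energy for the semi-discretization (Lemma 4.3).**
Let `(ρh, mh)` be a semi-discrete solution on `[0,T]`.  Then for every `t ∈ [0,T]`: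
`d/dt Σ_e ∫_0^{ℓ_e} ρ_h dx = 0`, and
`d/dt Σ_e ∫_0^{ℓ_e} ( m_h²/(2ρ_h) + P(ρ_h) ) dx
   + Σ_e ∫_0^{ℓ_e} ( a_e |∂ₓ m_h|²/ρ_h² + b_e |m_h|³/ρ_h² ) dx = 0`,
with `P_e(ρ) = c_e ρ^γ/(γ-1)` on edge `e`. -/
theorem semidiscrete_balance_of_mass_and_energy
    {V E : Type} [Fintype V] [Fintype E] [DecidableEq V]
    (src dst : E → V) (N : E → ℕ) (hN : ∀ e, 1 ≤ N e)
    (ℓ : E → ℝ) (hℓ : ∀ e, 0 < ℓ e)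
    (γ : ℝ) (hγ : 1 < γ) (a b c : E → ℝ)
    (ha : ∀ e, 0 ≤ a e) (hb : ∀ e, 0 ≤ b e) (hc : ∀ e, 0 < c e)
    (T : ℝ) (hT : 0 ≤ T)
    (ρh mh ρht mht : ℝ → E → ℝ → ℝ)
    (hsol : IsSemiDiscSol src dst N ℓ γ a b c (Set.Icc 0 T) ρh mh ρht mht)
    (t : ℝ) (ht : t ∈ Set.Icc 0 T) :
    HasDerivWithinAt (fun s => ∑ e, ∫ x in (0 : ℝ)..(ℓ e), ρh s e x)
      0 (Set.Icc 0 T) t ∧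
    HasDerivWithinAt (fun s => ∑ e, ∫ x in (0 : ℝ)..(ℓ e),
        (mh s e x ^ 2 / (2 * ρh s e x) + c e * ρh s e x ^ γ / (γ - 1)))
      (-(∑ e, ∫ x in (0 : ℝ)..(ℓ e),
          (a e * Dx N ℓ (mh t) e x ^ 2 / ρh t e x ^ 2
            + b e * |mh t e x| ^ 3 / ρh t e x ^ 2)))
      (Set.Icc 0 T) t := by
  classical
  obtain ⟨hmem, hpos, hderiv, -, -, heqs⟩ := hsol
  rcases eq_or_lt_of_le hT with hT0 | hT0
  · have ht0 : t = 0 := le_antisymm (by rw [hT0]; exact ht.2) ht.1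
    have hIcc : Set.Icc (0:ℝ) T = {t} := by rw [← hT0, ht0, Set.Icc_self]
    constructor <;>
    · rw [hasDerivWithinAt_iff_tendsto_slope, hIcc, Set.diff_self, nhdsWithin_empty]
      exact Filter.tendsto_bot
  · have hUD : UniqueDiffWithinAt ℝ (Set.Icc (0:ℝ) T) t := (uniqueDiffOn_Icc hT0) t ht
    have hγ1 : γ - 1 ≠ 0 := sub_ne_zero.2 hγ.ne'
    have hN0 : ∀ e, (0:ℝ) < N e := fun e => by exact_mod_cast hN e
    have hNne : ∀ e, (N e:ℝ) ≠ 0 := fun e => (hN0 e).ne'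
    have hlne : ∀ e, ℓ e ≠ 0 := fun e => (hℓ e).ne'
    have hm : ∀ s ∈ Set.Icc (0:ℝ) T, ∀ e, ∀ i, i < N e → ∀ x ∈ Set.Icc ((i : ℝ) * ℓ e / (N e : ℝ)) (((i : ℝ) + 1) * ℓ e / (N e : ℝ)),
        mh s e x = mh s e ((i : ℝ) * ℓ e / (N e : ℝ)) + (x - ((i : ℝ) * ℓ e / (N e : ℝ))) * ((mh s e (((i : ℝ) + 1) * ℓ e / (N e : ℝ)) - mh s e ((i : ℝ) * ℓ e / (N e : ℝ))) * ((N e : ℝ) / ℓ e)) :=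
      fun s hs e i hi x hx => pwAffine_interp (hmem s hs).2.1 e (hN e) (hℓ e) hi hx
    have hρ : ∀ s ∈ Set.Icc (0:ℝ) T, ∀ e, ∀ i, i < N e → ∀ x ∈ Set.Ico ((i : ℝ) * ℓ e / (N e : ℝ)) (((i : ℝ) + 1) * ℓ e / (N e : ℝ)),
        ρh s e x = ρh s e ((i : ℝ) * ℓ e / (N e : ℝ)) :=
      fun s hs e i hi x hx => (hmem s hs).1 e i hi x hx
    have hmt : ∀ e, ∀ i, i < N e → ∀ x ∈ Set.Icc ((i : ℝ) * ℓ e / (N e : ℝ)) (((i : ℝ) + 1) * ℓ e / (N e : ℝ)),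
        mht t e x = mht t e ((i : ℝ) * ℓ e / (N e : ℝ)) + (x - ((i : ℝ) * ℓ e / (N e : ℝ))) * ((mht t e (((i : ℝ) + 1) * ℓ e / (N e : ℝ)) - mht t e ((i : ℝ) * ℓ e / (N e : ℝ))) * ((N e : ℝ) / ℓ e)) := by
      intro e i hi x hx
      have hG : HasDerivWithinAt
          (fun s => mh s e ((i : ℝ) * ℓ e / (N e : ℝ)) + (x - ((i : ℝ) * ℓ e / (N e : ℝ))) * ((mh s e (((i : ℝ) + 1) * ℓ e / (N e : ℝ)) - mh s e ((i : ℝ) * ℓ e / (N e : ℝ))) * ((N e : ℝ) / ℓ e)))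
          (mht t e ((i : ℝ) * ℓ e / (N e : ℝ)) + (x - ((i : ℝ) * ℓ e / (N e : ℝ))) * ((mht t e (((i : ℝ) + 1) * ℓ e / (N e : ℝ)) - mht t e ((i : ℝ) * ℓ e / (N e : ℝ))) * ((N e : ℝ) / ℓ e))) (Set.Icc (0:ℝ) T) t :=
        ((hderiv t ht e _).2).add
          ((((hderiv t ht e _).2.sub (hderiv t ht e _).2).mul_const _).const_mul _)
      exact hUD.eq_deriv _ (hderiv t ht e x).2
        (hG.congr (fun s hs => hm s hs e i hi x hx) (hm t ht e i hi x hx))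
    have hρt : ∀ e, ∀ i, i < N e → ∀ x ∈ Set.Ico ((i : ℝ) * ℓ e / (N e : ℝ)) (((i : ℝ) + 1) * ℓ e / (N e : ℝ)),
        ρht t e x = ρht t e ((i : ℝ) * ℓ e / (N e : ℝ)) := by
      intro e i hi x hx
      exact hUD.eq_deriv _ (hderiv t ht e x).1
        (((hderiv t ht e _).1).congr (fun s hs => hρ s hs e i hi x hx) (hρ t ht e i hi x hx))
    constructor
    · -- mass balance
      have hmass0 : ∑ e, ∑ i ∈ Finset.range (N e), (ℓ e / (N e : ℝ)) * ρht t e ((i : ℝ) * ℓ e / (N e : ℝ)) = 0 := by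
        have h1 : pairE ℓ (ρht t) (fun _ _ => (1:ℝ))
            = ∑ e, ∑ i ∈ Finset.range (N e), (ℓ e / (N e : ℝ)) * ρht t e ((i : ℝ) * ℓ e / (N e : ℝ)) := by
          unfold pairE
          refine Finset.sum_congr rfl fun e _ => ?_
          rw [cellify (hN e) (hℓ e) (fun x => ρht t e x * 1) (fun i _ => ρht t e ((i : ℝ) * ℓ e / (N e : ℝ)))
              (fun i => continuous_const)
              (fun i hi x hx => by rw [mul_one, hρt e i hi x hx])]
          refine Finset.sum_congr rfl fun i hi => ?_
          rw [intervalIntegral.integral_const, smul_eq_mul, (show (((i : ℝ) + 1) * ℓ e / (N e : ℝ)) - ((i : ℝ) * ℓ e / (N e : ℝ)) = ℓ e / (N e : ℝ) from by ring)]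
        have h2 : pairE ℓ (Dx N ℓ (mh t)) (fun _ _ => (1:ℝ))
            = ∑ e, (mh t e (ℓ e) - mh t e 0) := by
          unfold pairE
          refine Finset.sum_congr rfl fun e _ => ?_
          rw [cellify (hN e) (hℓ e) (fun x => Dx N ℓ (mh t) e x * 1)
              (fun i _ => (mh t e (((i : ℝ) + 1) * ℓ e / (N e : ℝ)) - mh t e ((i : ℝ) * ℓ e / (N e : ℝ))) * ((N e : ℝ) / ℓ e))
              (fun i => continuous_const)
              (fun i hi x hx => by rw [mul_one, Dx_cell N ℓ (mh t) e (hN e) (hℓ e) hi hx])]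
          have tele := Finset.sum_range_sub (f := fun i : ℕ => mh t e ((i:ℝ) * ℓ e / (N e:ℝ))) (N e)
          push_cast at tele
          rw [show ((N e:ℝ)) * ℓ e / (N e : ℝ) = ℓ e by rw [mul_comm, mul_div_assoc, div_self (hNne e), mul_one],
              show (0:ℝ) * ℓ e / (N e:ℝ) = 0 by simp] at tele
          rw [← tele]
          refine Finset.sum_congr rfl fun i hi => ?_
          rw [intervalIntegral.integral_const, smul_eq_mul, (show (((i : ℝ) + 1) * ℓ e / (N e : ℝ)) - ((i : ℝ) * ℓ e / (N e : ℝ)) = ℓ e / (N e : ℝ) from by ring),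
              len_mul_slope (hNne e) (hlne e)]
        have h3 := (heqs t ht).1 (fun _ _ => (1:ℝ)) (fun e i hi x hx => rfl)
        have h4 := sum_edge_sub src dst ℓ (mh t) (hmem t ht).2.2
        rw [← h1, h3, h2, h4, neg_zero]
      have hcong : ∀ s ∈ Set.Icc (0:ℝ) T,
          ∑ e, ∫ x in (0:ℝ)..(ℓ e), ρh s e x
            = ∑ e, ∑ i ∈ Finset.range (N e), (ℓ e / (N e : ℝ)) * ρh s e ((i : ℝ) * ℓ e / (N e : ℝ)) := by
        intro s hs
        refine Finset.sum_congr rfl fun e _ => ?_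
        rw [cellify (hN e) (hℓ e) (fun x => ρh s e x) (fun i _ => ρh s e ((i : ℝ) * ℓ e / (N e : ℝ)))
            (fun i => continuous_const) (fun i hi x hx => hρ s hs e i hi x hx)]
        refine Finset.sum_congr rfl fun i hi => ?_
        rw [intervalIntegral.integral_const, smul_eq_mul, (show (((i : ℝ) + 1) * ℓ e / (N e : ℝ)) - ((i : ℝ) * ℓ e / (N e : ℝ)) = ℓ e / (N e : ℝ) from by ring)]
      have hD : HasDerivWithinAt
          (fun s => ∑ e, ∑ i ∈ Finset.range (N e), (ℓ e / (N e : ℝ)) * ρh s e ((i : ℝ) * ℓ e / (N e : ℝ)))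
          (∑ e, ∑ i ∈ Finset.range (N e), (ℓ e / (N e : ℝ)) * ρht t e ((i : ℝ) * ℓ e / (N e : ℝ))) (Set.Icc (0:ℝ) T) t :=
        HasDerivWithinAt.fun_sum fun e _ =>
          HasDerivWithinAt.fun_sum fun i _ => ((hderiv t ht e _).1).const_mul _
      have := hD.congr hcong (hcong t ht)
      rwa [hmass0] at this
    · -- energy balance
      have hEcong : ∀ s ∈ Set.Icc (0:ℝ) T,
          ∑ e, ∫ x in (0:ℝ)..(ℓ e), (mh s e x ^ 2 / (2 * ρh s e x) + c e * ρh s e x ^ γ / (γ - 1))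
            = ∑ e, ∑ i ∈ Finset.range (N e), ((mh s e ((i : ℝ) * ℓ e / (N e : ℝ))^2 + mh s e ((i : ℝ) * ℓ e / (N e : ℝ))*mh s e (((i : ℝ) + 1) * ℓ e / (N e : ℝ)) + mh s e (((i : ℝ) + 1) * ℓ e / (N e : ℝ))^2) * (ℓ e / (N e : ℝ)) / (6 * ρh s e ((i : ℝ) * ℓ e / (N e : ℝ))) + (ℓ e / (N e : ℝ)) * (c e * ρh s e ((i : ℝ) * ℓ e / (N e : ℝ)) ^ γ / (γ - 1))) := by
        intro s hs
        refine Finset.sum_congr rfl fun e _ => ?_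
        rw [cellify (hN e) (hℓ e)
            (fun x => mh s e x ^ 2 / (2 * ρh s e x) + c e * ρh s e x ^ γ / (γ - 1))
            (fun i x => (mh s e ((i : ℝ) * ℓ e / (N e : ℝ)) + (x - ((i : ℝ) * ℓ e / (N e : ℝ))) * ((mh s e (((i : ℝ) + 1) * ℓ e / (N e : ℝ)) - mh s e ((i : ℝ) * ℓ e / (N e : ℝ))) * ((N e : ℝ) / ℓ e))) * (mh s e ((i : ℝ) * ℓ e / (N e : ℝ)) + (x - ((i : ℝ) * ℓ e / (N e : ℝ))) * ((mh s e (((i : ℝ) + 1) * ℓ e / (N e : ℝ)) - mh s e ((i : ℝ) * ℓ e / (N e : ℝ))) * ((N e : ℝ) / ℓ e))) * (2 * ρh s e ((i : ℝ) * ℓ e / (N e : ℝ)))⁻¹ + c e * ρh s e ((i : ℝ) * ℓ e / (N e : ℝ)) ^ γ / (γ - 1))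
            (fun i => by fun_prop)
            (fun i hi x hx => by
              rw [hρ s hs e i hi x hx, hm s hs e i hi x (Set.Ico_subset_Icc_self hx)]
              ring)]
        refine Finset.sum_congr rfl fun i hi => ?_
        have hi' := Finset.mem_range.1 hi
        have hrpos : 0 < ρh s e ((i : ℝ) * ℓ e / (N e : ℝ)) := hpos s hs e _ (node_mem (hN e) (hℓ e) hi'.le)
        rw [intervalIntegral.integral_add
              (Continuous.intervalIntegrable (by fun_prop) _ _)
              (Continuous.intervalIntegrable (by fun_prop) _ _),
            intervalIntegral.integral_mul_const, integral_LL,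
            intervalIntegral.integral_const, smul_eq_mul, (show (((i : ℝ) + 1) * ℓ e / (N e : ℝ)) - ((i : ℝ) * ℓ e / (N e : ℝ)) = ℓ e / (N e : ℝ) from by ring)]
        set p1 := mh s e ((i : ℝ) * ℓ e / (N e : ℝ)) with hsp1
        set q1 := mh s e (((i : ℝ) + 1) * ℓ e / (N e : ℝ)) with hsq1
        set r1 := ρh s e ((i : ℝ) * ℓ e / (N e : ℝ)) with hsr1
        have hz1 : r1 ≠ 0 := hrpos.ne'
        have hz2 : (N e:ℝ) ≠ 0 := hNne e
        have hz3 : ℓ e ≠ 0 := hlne e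
        have hz4 : γ - 1 ≠ 0 := hγ1
        field_simp
        ring
      have hED : HasDerivWithinAt
          (fun s => ∑ e, ∑ i ∈ Finset.range (N e), ((mh s e ((i : ℝ) * ℓ e / (N e : ℝ))^2 + mh s e ((i : ℝ) * ℓ e / (N e : ℝ))*mh s e (((i : ℝ) + 1) * ℓ e / (N e : ℝ)) + mh s e (((i : ℝ) + 1) * ℓ e / (N e : ℝ))^2) * (ℓ e / (N e : ℝ)) / (6 * ρh s e ((i : ℝ) * ℓ e / (N e : ℝ))) + (ℓ e / (N e : ℝ)) * (c e * ρh s e ((i : ℝ) * ℓ e / (N e : ℝ)) ^ γ / (γ - 1))))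
          (∑ e, ∑ i ∈ Finset.range (N e), ((2*mh t e ((i : ℝ) * ℓ e / (N e : ℝ))*mht t e ((i : ℝ) * ℓ e / (N e : ℝ)) + mht t e ((i : ℝ) * ℓ e / (N e : ℝ))*mh t e (((i : ℝ) + 1) * ℓ e / (N e : ℝ)) + mh t e ((i : ℝ) * ℓ e / (N e : ℝ))*mht t e (((i : ℝ) + 1) * ℓ e / (N e : ℝ)) + 2*mh t e (((i : ℝ) + 1) * ℓ e / (N e : ℝ))*mht t e (((i : ℝ) + 1) * ℓ e / (N e : ℝ))) * (ℓ e / (N e : ℝ)) / (6 * ρh t e ((i : ℝ) * ℓ e / (N e : ℝ))) - (mh t e ((i : ℝ) * ℓ e / (N e : ℝ))^2 + mh t e ((i : ℝ) * ℓ e / (N e : ℝ))*mh t e (((i : ℝ) + 1) * ℓ e / (N e : ℝ)) + mh t e (((i : ℝ) + 1) * ℓ e / (N e : ℝ))^2) * (ℓ e / (N e : ℝ)) * ρht t e ((i : ℝ) * ℓ e / (N e : ℝ)) / (6 * ρh t e ((i : ℝ) * ℓ e / (N e : ℝ))^2) + (ℓ e / (N e : ℝ)) * (c e * (γ * ρh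 t e ((i : ℝ) * ℓ e / (N e : ℝ)) ^ (γ-1) * ρht t e ((i : ℝ) * ℓ e / (N e : ℝ))) / (γ - 1)))) (Set.Icc (0:ℝ) T) t := by
        refine HasDerivWithinAt.fun_sum fun e _ => HasDerivWithinAt.fun_sum fun i hi => ?_
        have hi' := Finset.mem_range.1 hi
        have hrpos : 0 < ρh t e ((i : ℝ) * ℓ e / (N e : ℝ)) := hpos t ht e _ (node_mem (hN e) (hℓ e) hi'.le)
        have hp := (hderiv t ht e ((i : ℝ) * ℓ e / (N e : ℝ))).2
        have hq := (hderiv t ht e (((i : ℝ) + 1) * ℓ e / (N e : ℝ))).2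
        have hr := (hderiv t ht e ((i : ℝ) * ℓ e / (N e : ℝ))).1
        have h1 := HasDerivWithinAt.fun_div
          ((((hp.fun_pow 2).fun_add (hp.fun_mul hq)).fun_add (hq.fun_pow 2)).mul_const (ℓ e / (N e : ℝ)))
          (hr.const_mul (6:ℝ)) ((mul_pos (by norm_num : (0:ℝ) < 6) hrpos).ne')
        have h2 := (((hr.rpow_const (p := γ) (Or.inl hrpos.ne')).const_mul (c e)).div_const (γ - 1)).const_mul (ℓ e / (N e : ℝ))
        convert h1.fun_add h2 using 1
        set p1 := mh t e ((i : ℝ) * ℓ e / (N e : ℝ)) with hsp1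
        set q1 := mh t e (((i : ℝ) + 1) * ℓ e / (N e : ℝ)) with hsq1
        set r1 := ρh t e ((i : ℝ) * ℓ e / (N e : ℝ)) with hsr1
        set p2 := mht t e ((i : ℝ) * ℓ e / (N e : ℝ)) with hsp2
        set q2 := mht t e (((i : ℝ) + 1) * ℓ e / (N e : ℝ)) with hsq2
        set r2 := ρht t e ((i : ℝ) * ℓ e / (N e : ℝ)) with hsr2
        have hz1 : r1 ≠ 0 := hrpos.ne'
        have hz2 : (N e:ℝ) ≠ 0 := hNne e
        have hz3 : ℓ e ≠ 0 := hlne e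
        have hz4 : γ - 1 ≠ 0 := hγ1
        field_simp
        ring
      have hkey : ∑ e, ∑ i ∈ Finset.range (N e), ((2*mh t e ((i : ℝ) * ℓ e / (N e : ℝ))*mht t e ((i : ℝ) * ℓ e / (N e : ℝ)) + mht t e ((i : ℝ) * ℓ e / (N e : ℝ))*mh t e (((i : ℝ) + 1) * ℓ e / (N e : ℝ)) + mh t e ((i : ℝ) * ℓ e / (N e : ℝ))*mht t e (((i : ℝ) + 1) * ℓ e / (N e : ℝ)) + 2*mh t e (((i : ℝ) + 1) * ℓ e / (N e : ℝ))*mht t e (((i : ℝ) + 1) * ℓ e / (N e : ℝ))) * (ℓ e / (N e : ℝ)) / (6 * ρh t e ((i : ℝ) * ℓ e / (N e : ℝ))) - (mh t e ((i : ℝ) * ℓ e / (N e : ℝ))^2 + mh t e ((i : ℝ) * ℓ e / (N e : ℝ))*mh t e (((i : ℝ) + 1) * ℓ e / (N e : ℝ)) + mh t e (((i : ℝ) + 1) * ℓ e / (N e : ℝ))^2) * (ℓ e / (N e : ℝ)) * ρht t e ((i : ℝ) * ℓ e / (N e : ℝ)) / (6 * ρh t e ((i : ℝ) * ℓ e / (N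 e : ℝ))^2) + (ℓ e / (N e : ℝ)) * (c e * (γ * ρh t e ((i : ℝ) * ℓ e / (N e : ℝ)) ^ (γ-1) * ρht t e ((i : ℝ) * ℓ e / (N e : ℝ))) / (γ - 1)))
          = -(∑ e, ∫ x in (0 : ℝ)..(ℓ e),
              (a e * Dx N ℓ (mh t) e x ^ 2 / ρh t e x ^ 2
                + b e * |mh t e x| ^ 3 / ρh t e x ^ 2)) := by
        have e1 := (heqs t ht).2 (mh t) (hmem t ht).2
        have e2 := (heqs t ht).1 (fun e x => c e * γ / (γ - 1) * ρh t e x ^ (γ - 1))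
          (fun e i hi x hx => by dsimp only; rw [(hmem t ht).1 e i hi x hx])
        have hA : pairE ℓ (fun e x => (1 / ρh t e x) * mht t e x - mh t e x / (2 * ρh t e x ^ 2) * ρht t e x) (mh t)
            = ∑ e, ∑ i ∈ Finset.range (N e), ∫ x in ((i : ℝ) * ℓ e / (N e : ℝ))..(((i : ℝ) + 1) * ℓ e / (N e : ℝ)), ((ρh t e ((i : ℝ) * ℓ e / (N e : ℝ)))⁻¹ * ((mht t e ((i : ℝ) * ℓ e / (N e : ℝ)) + (x - ((i : ℝ) * ℓ e / (N e : ℝ))) * ((mht t e (((i : ℝ) + 1) * ℓ e / (N e : ℝ)) - mht t e ((i : ℝ) * ℓ e / (N e : ℝ))) * ((N e : ℝ) / ℓ e))) * (mh t e ((i : ℝ) * ℓ e / (N e : ℝ)) + (x - ((i : ℝ) * ℓ e / (N e : ℝ))) * ((mh t e (((i : ℝ) + 1) * ℓ e / (N e : ℝ)) - mh t e ((i : ℝ) * ℓ e / (N e : ℝ))) * ((N e : ℝ) / ℓ e)))) - (ρht t e ((i : ℝ) * ℓ e / (N e : ℝ)) / (2 * ρh t e ((i : ℝ) * ℓ e /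 (N e : ℝ))^2)) * ((mh t e ((i : ℝ) * ℓ e / (N e : ℝ)) + (x - ((i : ℝ) * ℓ e / (N e : ℝ))) * ((mh t e (((i : ℝ) + 1) * ℓ e / (N e : ℝ)) - mh t e ((i : ℝ) * ℓ e / (N e : ℝ))) * ((N e : ℝ) / ℓ e))) * (mh t e ((i : ℝ) * ℓ e / (N e : ℝ)) + (x - ((i : ℝ) * ℓ e / (N e : ℝ))) * ((mh t e (((i : ℝ) + 1) * ℓ e / (N e : ℝ)) - mh t e ((i : ℝ) * ℓ e / (N e : ℝ))) * ((N e : ℝ) / ℓ e))))) := by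
          unfold pairE
          refine Finset.sum_congr rfl fun e _ => ?_
          exact cellify (hN e) (hℓ e) _ (fun i x => ((ρh t e ((i : ℝ) * ℓ e / (N e : ℝ)))⁻¹ * ((mht t e ((i : ℝ) * ℓ e / (N e : ℝ)) + (x - ((i : ℝ) * ℓ e / (N e : ℝ))) * ((mht t e (((i : ℝ) + 1) * ℓ e / (N e : ℝ)) - mht t e ((i : ℝ) * ℓ e / (N e : ℝ))) * ((N e : ℝ) / ℓ e))) * (mh t e ((i : ℝ) * ℓ e / (N e : ℝ)) + (x - ((i : ℝ) * ℓ e / (N e : ℝ))) * ((mh t e (((i : ℝ) + 1) * ℓ e / (N e : ℝ)) - mh t e ((i : ℝ) * ℓ e / (N e : ℝ))) * ((N e : ℝ) / ℓ e)))) - (ρht t e ((i : ℝ) * ℓ e / (N e : ℝ)) / (2 * ρh t e ((i : ℝ) * ℓ e / (N e : ℝ))^2)) * ((mh t e ((i : ℝ) * ℓ e / (N e : ℝ)) + (x - ((i : ℝ) * ℓ e / (N e : ℝ))) * ((mh t e (((i : ℝ) + 1) * ℓ e / (N e : ℝ)) - mh t e ((i : ℝ) * ℓ e / (N e : ℝ)))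 * ((N e : ℝ) / ℓ e))) * (mh t e ((i : ℝ) * ℓ e / (N e : ℝ)) + (x - ((i : ℝ) * ℓ e / (N e : ℝ))) * ((mh t e (((i : ℝ) + 1) * ℓ e / (N e : ℝ)) - mh t e ((i : ℝ) * ℓ e / (N e : ℝ))) * ((N e : ℝ) / ℓ e)))))) (fun i => by fun_prop)
            (fun i hi x hx => by
              dsimp only
              rw [hρ t ht e i hi x hx, hρt e i hi x hx,
                  hm t ht e i hi x (Set.Ico_subset_Icc_self hx),
                  hmt e i hi x (Set.Ico_subset_Icc_self hx)]
              ring)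
        have hDm : pairE ℓ (ρht t) (fun e x => c e * γ / (γ - 1) * ρh t e x ^ (γ - 1))
            = ∑ e, ∑ i ∈ Finset.range (N e), ∫ x in ((i : ℝ) * ℓ e / (N e : ℝ))..(((i : ℝ) + 1) * ℓ e / (N e : ℝ)), (ρht t e ((i : ℝ) * ℓ e / (N e : ℝ)) * (c e * γ / (γ - 1) * ρh t e ((i : ℝ) * ℓ e / (N e : ℝ)) ^ (γ - 1))) := by
          unfold pairE
          refine Finset.sum_congr rfl fun e _ => ?_
          exact cellify (hN e) (hℓ e) _ (fun i x => (ρht t e ((i : ℝ) * ℓ e / (N e : ℝ)) * (c e * γ / (γ - 1) * ρh t e ((i : ℝ) * ℓ e / (N e : ℝ)) ^ (γ - 1)))) (fun i => by fun_prop)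
            (fun i hi x hx => by dsimp only; rw [hρ t ht e i hi x hx, hρt e i hi x hx])
        have hB : pairE ℓ (fun e x => mh t e x ^ 2 / (2 * ρh t e x ^ 2) + c e * γ / (γ - 1) * ρh t e x ^ (γ - 1) - a e / ρh t e x ^ 2 * Dx N ℓ (mh t) e x) (Dx N ℓ (mh t))
            = ∑ e, ∑ i ∈ Finset.range (N e), ∫ x in ((i : ℝ) * ℓ e / (N e : ℝ))..(((i : ℝ) + 1) * ℓ e / (N e : ℝ)), (((mh t e ((i : ℝ) * ℓ e / (N e : ℝ)) + (x - ((i : ℝ) * ℓ e / (N e : ℝ))) * ((mh t e (((i : ℝ) + 1) * ℓ e / (N e : ℝ)) - mh t e ((i : ℝ) * ℓ e / (N e : ℝ))) * ((N e : ℝ) / ℓ e)))^2 / (2 * ρh t e ((i : ℝ) * ℓ e / (N e : ℝ))^2) + (c e * γ / (γ - 1) * ρh t e ((i : ℝ) * ℓ e / (N e : ℝ)) ^ (γ - 1)) - a e / ρh t e ((i : ℝ) * ℓ e / (N e : ℝ))^2 * ((mh t e (((i : ℝ) + 1) * ℓ e / (N e : ℝ)) - mh t e ((i : ℝ) * ℓ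 e / (N e : ℝ))) * ((N e : ℝ) / ℓ e))) * ((mh t e (((i : ℝ) + 1) * ℓ e / (N e : ℝ)) - mh t e ((i : ℝ) * ℓ e / (N e : ℝ))) * ((N e : ℝ) / ℓ e))) := by
          unfold pairE
          refine Finset.sum_congr rfl fun e _ => ?_
          exact cellify (hN e) (hℓ e) _ (fun i x => (((mh t e ((i : ℝ) * ℓ e / (N e : ℝ)) + (x - ((i : ℝ) * ℓ e / (N e : ℝ))) * ((mh t e (((i : ℝ) + 1) * ℓ e / (N e : ℝ)) - mh t e ((i : ℝ) * ℓ e / (N e : ℝ))) * ((N e : ℝ) / ℓ e)))^2 / (2 * ρh t e ((i : ℝ) * ℓ e / (N e : ℝ))^2) + (c e * γ / (γ - 1) * ρh t e ((i : ℝ) * ℓ e / (N e : ℝ)) ^ (γ - 1)) - a e / ρh t e ((i : ℝ) * ℓ e / (N e : ℝ))^2 * ((mh t e (((i : ℝ) + 1) * ℓ e / (N e : ℝ)) - mh t e ((i : ℝ) * ℓ e / (N e : ℝ))) * ((N e : ℝ) / ℓ e))) * ((mh t e (((i : ℝ) + 1) * ℓ e / (N e : ℝ)) - mh t e ((i : ℝ)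 * ℓ e / (N e : ℝ))) * ((N e : ℝ) / ℓ e)))) (fun i => by fun_prop)
            (fun i hi x hx => by
              dsimp only
              rw [hρ t ht e i hi x hx, Dx_cell N ℓ (mh t) e (hN e) (hℓ e) hi hx,
                  hm t ht e i hi x (Set.Ico_subset_Icc_self hx)])
        have hC : pairE ℓ (fun e x => mh t e x / (2 * ρh t e x ^ 2) * Dx N ℓ (mh t) e x + b e * |mh t e x| * mh t e x / ρh t e x ^ 2) (mh t)
            = ∑ e, ∑ i ∈ Finset.range (N e), ∫ x in ((i : ℝ) * ℓ e / (N e : ℝ))..(((i : ℝ) + 1) * ℓ e / (N e : ℝ)), (((mh t e ((i : ℝ) * ℓ e / (N e : ℝ)) + (x - ((i : ℝ) * ℓ e / (N e : ℝ))) * ((mh t e (((i : ℝ) + 1) * ℓ e / (N e : ℝ)) - mh t e ((i : ℝ) * ℓ e / (N e : ℝ))) * ((N e : ℝ) / ℓ e))) / (2 * ρh t e ((i : ℝ) * ℓ e / (N e : ℝ))^2) * ((mh t e (((i : ℝ) + 1) * ℓ e / (N e : ℝ)) - mh t e ((i : ℝ) * ℓ e / (N e : ℝ))) * ((N e : ℝ)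 / ℓ e)) + b e * |(mh t e ((i : ℝ) * ℓ e / (N e : ℝ)) + (x - ((i : ℝ) * ℓ e / (N e : ℝ))) * ((mh t e (((i : ℝ) + 1) * ℓ e / (N e : ℝ)) - mh t e ((i : ℝ) * ℓ e / (N e : ℝ))) * ((N e : ℝ) / ℓ e)))| * (mh t e ((i : ℝ) * ℓ e / (N e : ℝ)) + (x - ((i : ℝ) * ℓ e / (N e : ℝ))) * ((mh t e (((i : ℝ) + 1) * ℓ e / (N e : ℝ)) - mh t e ((i : ℝ) * ℓ e / (N e : ℝ))) * ((N e : ℝ) / ℓ e))) / ρh t e ((i : ℝ) * ℓ e / (N e : ℝ))^2) * (mh t e ((i : ℝ) * ℓ e / (N e : ℝ)) + (x - ((i : ℝ) * ℓ e / (N e : ℝ))) * ((mh t e (((i : ℝ) + 1) * ℓ e / (N e : ℝ)) - mh t e ((i : ℝ) * ℓ e / (N e : ℝ))) * ((N e : ℝ) / ℓ e)))) := by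
          unfold pairE
          refine Finset.sum_congr rfl fun e _ => ?_
          exact cellify (hN e) (hℓ e) _ (fun i x => (((mh t e ((i : ℝ) * ℓ e / (N e : ℝ)) + (x - ((i : ℝ) * ℓ e / (N e : ℝ))) * ((mh t e (((i : ℝ) + 1) * ℓ e / (N e : ℝ)) - mh t e ((i : ℝ) * ℓ e / (N e : ℝ))) * ((N e : ℝ) / ℓ e))) / (2 * ρh t e ((i : ℝ) * ℓ e / (N e : ℝ))^2) * ((mh t e (((i : ℝ) + 1) * ℓ e / (N e : ℝ)) - mh t e ((i : ℝ) * ℓ e / (N e : ℝ))) * ((N e : ℝ) / ℓ e)) + b e * |(mh t e ((i : ℝ) * ℓ e / (N e : ℝ)) + (x - ((i : ℝ) * ℓ e / (N e : ℝ))) * ((mh t e (((i : ℝ) + 1) * ℓ e / (N e : ℝ)) - mh t e ((i : ℝ) * ℓ e / (N e : ℝ))) * ((N e : ℝ) / ℓ e)))| * (mh t e ((i : ℝ) * ℓ e / (N e : ℝ)) + (x - ((i : ℝ) * ℓ e / (N e : ℝ))) * ((mh t e (((i : ℝ) + 1) * ℓ e / (N e : ℝ)) - mh t e ((i : ℝ)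 * ℓ e / (N e : ℝ))) * ((N e : ℝ) / ℓ e))) / ρh t e ((i : ℝ) * ℓ e / (N e : ℝ))^2) * (mh t e ((i : ℝ) * ℓ e / (N e : ℝ)) + (x - ((i : ℝ) * ℓ e / (N e : ℝ))) * ((mh t e (((i : ℝ) + 1) * ℓ e / (N e : ℝ)) - mh t e ((i : ℝ) * ℓ e / (N e : ℝ))) * ((N e : ℝ) / ℓ e))))) (fun i => by fun_prop)
            (fun i hi x hx => by
              dsimp only
              rw [hρ t ht e i hi x hx, Dx_cell N ℓ (mh t) e (hN e) (hℓ e) hi hx,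
                  hm t ht e i hi x (Set.Ico_subset_Icc_self hx)])
        have hDq : pairE ℓ (Dx N ℓ (mh t)) (fun e x => c e * γ / (γ - 1) * ρh t e x ^ (γ - 1))
            = ∑ e, ∑ i ∈ Finset.range (N e), ∫ x in ((i : ℝ) * ℓ e / (N e : ℝ))..(((i : ℝ) + 1) * ℓ e / (N e : ℝ)), (((mh t e (((i : ℝ) + 1) * ℓ e / (N e : ℝ)) - mh t e ((i : ℝ) * ℓ e / (N e : ℝ))) * ((N e : ℝ) / ℓ e)) * (c e * γ / (γ - 1) * ρh t e ((i : ℝ) * ℓ e / (N e : ℝ)) ^ (γ - 1))) := by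
          unfold pairE
          refine Finset.sum_congr rfl fun e _ => ?_
          exact cellify (hN e) (hℓ e) _ (fun i x => (((mh t e (((i : ℝ) + 1) * ℓ e / (N e : ℝ)) - mh t e ((i : ℝ) * ℓ e / (N e : ℝ))) * ((N e : ℝ) / ℓ e)) * (c e * γ / (γ - 1) * ρh t e ((i : ℝ) * ℓ e / (N e : ℝ)) ^ (γ - 1)))) (fun i => by fun_prop)
            (fun i hi x hx => by
              dsimp only
              rw [hρ t ht e i hi x hx, Dx_cell N ℓ (mh t) e (hN e) (hℓ e) hi hx])
        have hF : ∑ e, ∫ x in (0 : ℝ)..(ℓ e),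
              (a e * Dx N ℓ (mh t) e x ^ 2 / ρh t e x ^ 2
                + b e * |mh t e x| ^ 3 / ρh t e x ^ 2)
            = ∑ e, ∑ i ∈ Finset.range (N e), ∫ x in ((i : ℝ) * ℓ e / (N e : ℝ))..(((i : ℝ) + 1) * ℓ e / (N e : ℝ)), (a e * ((mh t e (((i : ℝ) + 1) * ℓ e / (N e : ℝ)) - mh t e ((i : ℝ) * ℓ e / (N e : ℝ))) * ((N e : ℝ) / ℓ e))^2 / ρh t e ((i : ℝ) * ℓ e / (N e : ℝ))^2 + b e * |(mh t e ((i : ℝ) * ℓ e / (N e : ℝ)) + (x - ((i : ℝ) * ℓ e / (N e : ℝ))) * ((mh t e (((i : ℝ) + 1) * ℓ e / (N e : ℝ)) - mh t e ((i : ℝ) * ℓ e / (N e : ℝ))) * ((N e : ℝ) / ℓ e)))|^3 / ρh t e ((i : ℝ) * ℓ e / (N e : ℝ))^2) := by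
          refine Finset.sum_congr rfl fun e _ => ?_
          exact cellify (hN e) (hℓ e) _ (fun i x => (a e * ((mh t e (((i : ℝ) + 1) * ℓ e / (N e : ℝ)) - mh t e ((i : ℝ) * ℓ e / (N e : ℝ))) * ((N e : ℝ) / ℓ e))^2 / ρh t e ((i : ℝ) * ℓ e / (N e : ℝ))^2 + b e * |(mh t e ((i : ℝ) * ℓ e / (N e : ℝ)) + (x - ((i : ℝ) * ℓ e / (N e : ℝ))) * ((mh t e (((i : ℝ) + 1) * ℓ e / (N e : ℝ)) - mh t e ((i : ℝ) * ℓ e / (N e : ℝ))) * ((N e : ℝ) / ℓ e)))|^3 / ρh t e ((i : ℝ) * ℓ e / (N e : ℝ))^2)) (fun i => by fun_prop)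
            (fun i hi x hx => by
              rw [hρ t ht e i hi x hx, Dx_cell N ℓ (mh t) e (hN e) (hℓ e) hi hx,
                  hm t ht e i hi x (Set.Ico_subset_Icc_self hx)])
        have e3 : ∑ e, ∑ i ∈ Finset.range (N e), ((2*mh t e ((i : ℝ) * ℓ e / (N e : ℝ))*mht t e ((i : ℝ) * ℓ e / (N e : ℝ)) + mht t e ((i : ℝ) * ℓ e / (N e : ℝ))*mh t e (((i : ℝ) + 1) * ℓ e / (N e : ℝ)) + mh t e ((i : ℝ) * ℓ e / (N e : ℝ))*mht t e (((i : ℝ) + 1) * ℓ e / (N e : ℝ)) + 2*mh t e (((i : ℝ) + 1) * ℓ e / (N e : ℝ))*mht t e (((i : ℝ) + 1) * ℓ e / (N e : ℝ))) * (ℓ e / (N e : ℝ)) / (6 * ρh t e ((i : ℝ) * ℓ e / (N e : ℝ))) - (mh t e ((i : ℝ) * ℓ e / (N e : ℝ))^2 + mh t e ((i : ℝ) * ℓ e / (N e : ℝ))*mh t e (((i : ℝ) + 1) * ℓ e / (N e : ℝ)) + mh t e (((i : ℝ) + 1) * ℓ e / (N e : ℝ))^2) * (ℓ e / (N e : ℝ))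 * ρht t e ((i : ℝ) * ℓ e / (N e : ℝ)) / (6 * ρh t e ((i : ℝ) * ℓ e / (N e : ℝ))^2) + (ℓ e / (N e : ℝ)) * (c e * (γ * ρh t e ((i : ℝ) * ℓ e / (N e : ℝ)) ^ (γ-1) * ρht t e ((i : ℝ) * ℓ e / (N e : ℝ))) / (γ - 1)))
            = pairE ℓ (fun e x => (1 / ρh t e x) * mht t e x - mh t e x / (2 * ρh t e x ^ 2) * ρht t e x) (mh t) + pairE ℓ (ρht t) (fun e x => c e * γ / (γ - 1) * ρh t e x ^ (γ - 1)) := by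
          rw [hA, hDm, ← Finset.sum_add_distrib]
          refine Finset.sum_congr rfl fun e _ => ?_
          rw [← Finset.sum_add_distrib]
          refine Finset.sum_congr rfl fun i hi => ?_
          have hi' := Finset.mem_range.1 hi
          have hrpos : 0 < ρh t e ((i : ℝ) * ℓ e / (N e : ℝ)) := hpos t ht e _ (node_mem (hN e) (hℓ e) hi'.le)
          rw [intervalIntegral.integral_sub
                (Continuous.intervalIntegrable (by fun_prop) _ _)
                (Continuous.intervalIntegrable (by fun_prop) _ _),
              intervalIntegral.integral_const_mul, intervalIntegral.integral_const_mul,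
              integral_LL, integral_LL, intervalIntegral.integral_const, smul_eq_mul, (show (((i : ℝ) + 1) * ℓ e / (N e : ℝ)) - ((i : ℝ) * ℓ e / (N e : ℝ)) = ℓ e / (N e : ℝ) from by ring)]
          set p1 := mh t e ((i : ℝ) * ℓ e / (N e : ℝ)) with hsp1
          set q1 := mh t e (((i : ℝ) + 1) * ℓ e / (N e : ℝ)) with hsq1
          set r1 := ρh t e ((i : ℝ) * ℓ e / (N e : ℝ)) with hsr1
          set p2 := mht t e ((i : ℝ) * ℓ e / (N e : ℝ)) with hsp2
          set q2 := mht t e (((i : ℝ) + 1) * ℓ e / (N e : ℝ)) with hsq2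
          set r2 := ρht t e ((i : ℝ) * ℓ e / (N e : ℝ)) with hsr2
          have hz1 : r1 ≠ 0 := hrpos.ne'
          have hz2 : (N e:ℝ) ≠ 0 := hNne e
          have hz3 : ℓ e ≠ 0 := hlne e
          have hz4 : γ - 1 ≠ 0 := hγ1
          field_simp
          ring
        have e4 : ∀ e, ∀ i ∈ Finset.range (N e),
            (∫ x in ((i : ℝ) * ℓ e / (N e : ℝ))..(((i : ℝ) + 1) * ℓ e / (N e : ℝ)), (((mh t e ((i : ℝ) * ℓ e / (N e : ℝ)) + (x - ((i : ℝ) * ℓ e / (N e : ℝ))) * ((mh t e (((i : ℝ) + 1) * ℓ e / (N e : ℝ)) - mh t e ((i : ℝ) * ℓ e / (N e : ℝ))) * ((N e : ℝ) / ℓ e)))^2 / (2 * ρh t e ((i : ℝ) * ℓ e / (N e : ℝ))^2) + (c e * γ / (γ - 1) * ρh t e ((i : ℝ) * ℓ e / (N e : ℝ)) ^ (γ - 1)) - a e / ρh t e ((i : ℝ) * ℓ e / (N e : ℝ))^2 * ((mh t e (((i : ℝ) + 1) * ℓ e / (N e : ℝ)) - mh t e ((i : ℝ) * ℓ e / (N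 e : ℝ))) * ((N e : ℝ) / ℓ e))) * ((mh t e (((i : ℝ) + 1) * ℓ e / (N e : ℝ)) - mh t e ((i : ℝ) * ℓ e / (N e : ℝ))) * ((N e : ℝ) / ℓ e))))
              = (∫ x in ((i : ℝ) * ℓ e / (N e : ℝ))..(((i : ℝ) + 1) * ℓ e / (N e : ℝ)), (((mh t e ((i : ℝ) * ℓ e / (N e : ℝ)) + (x - ((i : ℝ) * ℓ e / (N e : ℝ))) * ((mh t e (((i : ℝ) + 1) * ℓ e / (N e : ℝ)) - mh t e ((i : ℝ) * ℓ e / (N e : ℝ))) * ((N e : ℝ) / ℓ e))) / (2 * ρh t e ((i : ℝ) * ℓ e / (N e : ℝ))^2) * ((mh t e (((i : ℝ) + 1) * ℓ e / (N e : ℝ)) - mh t e ((i : ℝ) * ℓ e / (N e : ℝ))) * ((N e : ℝ) / ℓ e)) + b e * |(mh t e ((i : ℝ) * ℓ e / (N e : ℝ)) + (x - ((i : ℝ) * ℓ e / (N e : ℝ))) * ((mh t e (((i : ℝ) + 1) * ℓ e / (N e : ℝ)) - mh t e ((i : ℝ) * ℓ e / (N e : ℝ))) * ((N e : ℝ) /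 ℓ e)))| * (mh t e ((i : ℝ) * ℓ e / (N e : ℝ)) + (x - ((i : ℝ) * ℓ e / (N e : ℝ))) * ((mh t e (((i : ℝ) + 1) * ℓ e / (N e : ℝ)) - mh t e ((i : ℝ) * ℓ e / (N e : ℝ))) * ((N e : ℝ) / ℓ e))) / ρh t e ((i : ℝ) * ℓ e / (N e : ℝ))^2) * (mh t e ((i : ℝ) * ℓ e / (N e : ℝ)) + (x - ((i : ℝ) * ℓ e / (N e : ℝ))) * ((mh t e (((i : ℝ) + 1) * ℓ e / (N e : ℝ)) - mh t e ((i : ℝ) * ℓ e / (N e : ℝ))) * ((N e : ℝ) / ℓ e))))) + (∫ x in ((i : ℝ) * ℓ e / (N e : ℝ))..(((i : ℝ) + 1) * ℓ e / (N e : ℝ)), (((mh t e (((i : ℝ) + 1) * ℓ e / (N e : ℝ)) - mh t e ((i : ℝ) * ℓ e / (N e : ℝ))) * ((N e : ℝ) / ℓ e)) * (c e * γ / (γ - 1) * ρh t e ((i : ℝ) * ℓ e / (N e : ℝ)) ^ (γ - 1))))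
                - ∫ x in ((i : ℝ) * ℓ e / (N e : ℝ))..(((i : ℝ) + 1) * ℓ e / (N e : ℝ)), (a e * ((mh t e (((i : ℝ) + 1) * ℓ e / (N e : ℝ)) - mh t e ((i : ℝ) * ℓ e / (N e : ℝ))) * ((N e : ℝ) / ℓ e))^2 / ρh t e ((i : ℝ) * ℓ e / (N e : ℝ))^2 + b e * |(mh t e ((i : ℝ) * ℓ e / (N e : ℝ)) + (x - ((i : ℝ) * ℓ e / (N e : ℝ))) * ((mh t e (((i : ℝ) + 1) * ℓ e / (N e : ℝ)) - mh t e ((i : ℝ) * ℓ e / (N e : ℝ))) * ((N e : ℝ) / ℓ e)))|^3 / ρh t e ((i : ℝ) * ℓ e / (N e : ℝ))^2) := by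
          intro e i hi
          have hident : ∀ x : ℝ, (((mh t e ((i : ℝ) * ℓ e / (N e : ℝ)) + (x - ((i : ℝ) * ℓ e / (N e : ℝ))) * ((mh t e (((i : ℝ) + 1) * ℓ e / (N e : ℝ)) - mh t e ((i : ℝ) * ℓ e / (N e : ℝ))) * ((N e : ℝ) / ℓ e)))^2 / (2 * ρh t e ((i : ℝ) * ℓ e / (N e : ℝ))^2) + (c e * γ / (γ - 1) * ρh t e ((i : ℝ) * ℓ e / (N e : ℝ)) ^ (γ - 1)) - a e / ρh t e ((i : ℝ) * ℓ e / (N e : ℝ))^2 * ((mh t e (((i : ℝ) + 1) * ℓ e / (N e : ℝ)) - mh t e ((i : ℝ) * ℓ e / (N e : ℝ))) * ((N e : ℝ) / ℓ e))) * ((mh t e (((i : ℝ) + 1) * ℓ e / (N e : ℝ)) - mh t e ((i : ℝ) * ℓ e / (N e : ℝ))) * ((N e : ℝ) / ℓ e))) = (((mh t e ((i : ℝ) * ℓ e / (N e : ℝ)) + (x - ((i : ℝ) * ℓ e / (N e : ℝ))) * ((mh t e (((i : ℝ) + 1) * ℓ e / (N e : ℝ)) - mh t e ((i : ℝ) * ℓ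 e / (N e : ℝ))) * ((N e : ℝ) / ℓ e))) / (2 * ρh t e ((i : ℝ) * ℓ e / (N e : ℝ))^2) * ((mh t e (((i : ℝ) + 1) * ℓ e / (N e : ℝ)) - mh t e ((i : ℝ) * ℓ e / (N e : ℝ))) * ((N e : ℝ) / ℓ e)) + b e * |(mh t e ((i : ℝ) * ℓ e / (N e : ℝ)) + (x - ((i : ℝ) * ℓ e / (N e : ℝ))) * ((mh t e (((i : ℝ) + 1) * ℓ e / (N e : ℝ)) - mh t e ((i : ℝ) * ℓ e / (N e : ℝ))) * ((N e : ℝ) / ℓ e)))| * (mh t e ((i : ℝ) * ℓ e / (N e : ℝ)) + (x - ((i : ℝ) * ℓ e / (N e : ℝ))) * ((mh t e (((i : ℝ) + 1) * ℓ e / (N e : ℝ)) - mh t e ((i : ℝ) * ℓ e / (N e : ℝ))) * ((N e : ℝ) / ℓ e))) / ρh t e ((i : ℝ) * ℓ e / (N e : ℝ))^2) * (mh t e ((i : ℝ) * ℓ e / (N e : ℝ)) + (x - ((i : ℝ) * ℓ e / (N e : ℝ))) * ((mh t e (((i : ℝ) + 1) * ℓ e / (N e : ℝ)) - mh t e ((i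 : ℝ) * ℓ e / (N e : ℝ))) * ((N e : ℝ) / ℓ e)))) + (((mh t e (((i : ℝ) + 1) * ℓ e / (N e : ℝ)) - mh t e ((i : ℝ) * ℓ e / (N e : ℝ))) * ((N e : ℝ) / ℓ e)) * (c e * γ / (γ - 1) * ρh t e ((i : ℝ) * ℓ e / (N e : ℝ)) ^ (γ - 1))) - (a e * ((mh t e (((i : ℝ) + 1) * ℓ e / (N e : ℝ)) - mh t e ((i : ℝ) * ℓ e / (N e : ℝ))) * ((N e : ℝ) / ℓ e))^2 / ρh t e ((i : ℝ) * ℓ e / (N e : ℝ))^2 + b e * |(mh t e ((i : ℝ) * ℓ e / (N e : ℝ)) + (x - ((i : ℝ) * ℓ e / (N e : ℝ))) * ((mh t e (((i : ℝ) + 1) * ℓ e / (N e : ℝ)) - mh t e ((i : ℝ) * ℓ e / (N e : ℝ))) * ((N e : ℝ) / ℓ e)))|^3 / ρh t e ((i : ℝ) * ℓ e / (N e : ℝ))^2) := by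
            intro x
            rw [abs_cube]
            ring
          rw [intervalIntegral.integral_congr
                (g := fun x => (((mh t e ((i : ℝ) * ℓ e / (N e : ℝ)) + (x - ((i : ℝ) * ℓ e / (N e : ℝ))) * ((mh t e (((i : ℝ) + 1) * ℓ e / (N e : ℝ)) - mh t e ((i : ℝ) * ℓ e / (N e : ℝ))) * ((N e : ℝ) / ℓ e))) / (2 * ρh t e ((i : ℝ) * ℓ e / (N e : ℝ))^2) * ((mh t e (((i : ℝ) + 1) * ℓ e / (N e : ℝ)) - mh t e ((i : ℝ) * ℓ e / (N e : ℝ))) * ((N e : ℝ) / ℓ e)) + b e * |(mh t e ((i : ℝ) * ℓ e / (N e : ℝ)) + (x - ((i : ℝ) * ℓ e / (N e : ℝ))) * ((mh t e (((i : ℝ) + 1) * ℓ e / (N e : ℝ)) - mh t e ((i : ℝ) * ℓ e / (N e : ℝ))) * ((N e : ℝ) / ℓ e)))| * (mh t e ((i : ℝ) * ℓ e / (N e : ℝ)) + (x - ((i : ℝ) * ℓ e / (N e : ℝ))) * ((mh t e (((i : ℝ) + 1) * ℓ e / (N e : ℝ)) - mh t e ((i : ℝ) * ℓ e / (N e : ℝ)))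 * ((N e : ℝ) / ℓ e))) / ρh t e ((i : ℝ) * ℓ e / (N e : ℝ))^2) * (mh t e ((i : ℝ) * ℓ e / (N e : ℝ)) + (x - ((i : ℝ) * ℓ e / (N e : ℝ))) * ((mh t e (((i : ℝ) + 1) * ℓ e / (N e : ℝ)) - mh t e ((i : ℝ) * ℓ e / (N e : ℝ))) * ((N e : ℝ) / ℓ e)))) + (((mh t e (((i : ℝ) + 1) * ℓ e / (N e : ℝ)) - mh t e ((i : ℝ) * ℓ e / (N e : ℝ))) * ((N e : ℝ) / ℓ e)) * (c e * γ / (γ - 1) * ρh t e ((i : ℝ) * ℓ e / (N e : ℝ)) ^ (γ - 1))) - (a e * ((mh t e (((i : ℝ) + 1) * ℓ e / (N e : ℝ)) - mh t e ((i : ℝ) * ℓ e / (N e : ℝ))) * ((N e : ℝ) / ℓ e))^2 / ρh t e ((i : ℝ) * ℓ e / (N e : ℝ))^2 + b e * |(mh t e ((i : ℝ) * ℓ e / (N e : ℝ)) + (x - ((i : ℝ) * ℓ e / (N e : ℝ))) * ((mh t e (((i : ℝ) + 1) * ℓ e / (N e : ℝ)) - mh t e ((i : ℝ) * ℓ e /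 (N e : ℝ))) * ((N e : ℝ) / ℓ e)))|^3 / ρh t e ((i : ℝ) * ℓ e / (N e : ℝ))^2)) (fun x _ => hident x),
              intervalIntegral.integral_sub
                (Continuous.intervalIntegrable (by fun_prop) _ _)
                (Continuous.intervalIntegrable (by fun_prop) _ _),
              intervalIntegral.integral_add
                (Continuous.intervalIntegrable (by fun_prop) _ _)
                (Continuous.intervalIntegrable (by fun_prop) _ _)]
        rw [e3, e1, e2, hB, hC, hDq, hF]
        rw [Finset.sum_congr rfl (fun e _ => Finset.sum_congr rfl (e4 e))]
        simp only [Finset.sum_add_distrib, Finset.sum_sub_distrib]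
        ring
      have hfinal := hED.congr hEcong (hEcong t ht)
      rwa [hkey] at hfinal
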